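/- Let W ⊆ C^ω be M-prefix-independent and M-cycle-consistent, m a state of M, and γ, γ' cycles on m such that γγ' is winning on m. Then for every n ≥ 1, the cycle γ(γ')^n is winning on m (repetition independence). -/
import Mathlib


/-- Concatenation of a finite word with an infinite word. -/
def app {C : Type*} : List C → (ℕ → C) → (ℕ → C)
  | [], w' => w'
  | c :: u, w' => fun i =>
    match i with
    | 0 => c
    | j + 1 => app u w' j

/-- Extension of the update function of a skeleton to finite words. -/
def updStar {C M : Type*} (upd : M → C → M) (m : M) (w : List C) : M :=
  w.foldl upd m

/-- The infinite word `γ^ω` obtained by repeating a (nonempty) finite word forever. -/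
def periodic {C : Type*} [Inhabited C] (γ : List C) : ℕ → C :=
  fun i => γ.getD (i % γ.length) default

/-- The infinite word obtained by concatenating the (nonempty) finite words
`ws 0, ws 1, ws 2, …`. -/
def concatSeq {C : Type*} [Inhabited C] (ws : ℕ → List C) : ℕ → C :=
  fun i => (((List.range (i + 1)).map ws).flatten).getD i default

/-- `W` is `M`-prefix-independent: any two finite words reaching the same state of the
skeleton from the initial state have the same winning continuations. -/
def PrefIndep {C M : Type*} (upd : M → C → M) (init : M) (W : Set (ℕ → C)) : Prop :=
  ∀ w₁ w₂ : List C, updStar upd init w₁ = updStar upd init w₂ →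
    ∀ w' : ℕ → C, (app w₁ w' ∈ W ↔ app w₂ w' ∈ W)

/-- `W` is `M`-cycle-consistent: after any finite word `w`, any infinite concatenation of
winning (resp. losing) cycles on the state reached by `w` yields a winning (resp. losing)
continuation of `w`. -/
def CycleConsistent {C M : Type*} [Inhabited C] (upd : M → C → M) (init : M)
    (W : Set (ℕ → C)) : Prop :=
  ∀ w : List C, ∀ ws : ℕ → List C,
    (∀ k, ws k ≠ [] ∧ updStar upd (updStar upd init w) (ws k) = updStar upd init w) →
    ((∀ k, app w (periodic (ws k)) ∈ W) → app w (concatSeq ws) ∈ W) ∧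
    ((∀ k, app w (periodic (ws k)) ∉ W) → app w (concatSeq ws) ∉ W)

namespace SAux
set_option linter.unusedSectionVars false

variable {C M : Type*} [Inhabited C]

lemma app_apply (u : List C) (x : ℕ → C) (i : ℕ) :
    app u x i = if i < u.length then u.getD i default else x (i - u.length) := by
  induction u generalizing i with
  | nil => simp [app]
  | cons c u ih =>
    cases i with
    | zero => simp [app]
    | succ j => simpa [app, Nat.succ_lt_succ_iff] using ih j

lemma app_append (u v : List C) (x : ℕ → C) : app (u ++ v) x = app u (app v x) := by
  induction u with
  | nil => rfl
  | cons c u ih =>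
    funext i
    cases i with
    | zero => rfl
    | succ j => simpa [app] using congrFun ih j

lemma updStar_append (upd : M → C → M) (q : M) (u v : List C) :
    updStar upd q (u ++ v) = updStar upd (updStar upd q u) v := by
  simp only [updStar, List.foldl_append]

def powW (u : List C) (k : ℕ) : List C := (List.replicate k u).flatten

lemma powW_zero (u : List C) : powW u 0 = [] := rfl

lemma powW_one (u : List C) : powW u 1 = u := by simp [powW]

lemma powW_add (u : List C) (s t : ℕ) : powW u (s + t) = powW u s ++ powW u t := by
  unfold powW
  rw [List.replicate_add, List.flatten_append]

lemma powW_succ (u : List C) (k : ℕ) : powW u (k + 1) = u ++ powW u k := by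
  simp [powW, List.replicate_succ]

lemma powW_succ' (u : List C) (k : ℕ) : powW u (k + 1) = powW u k ++ u := by
  rw [powW_add, powW_one]

lemma powW_ne_nil (u : List C) (hu : u ≠ []) {k : ℕ} (hk : 1 ≤ k) : powW u k ≠ [] := by
  obtain ⟨j, rfl⟩ := Nat.exists_eq_add_of_le hk
  rw [Nat.add_comm, powW_succ]
  simp [hu]

lemma length_powW (u : List C) (k : ℕ) : (powW u k).length = k * u.length := by
  induction k with
  | zero => simp [powW]
  | succ k ih => rw [powW_succ, List.length_append, ih]; ring

lemma updStar_powW {upd : M → C → M} {q : M} {u : List C} (h : updStar upd q u = q) (k : ℕ) :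
    updStar upd q (powW u k) = q := by
  induction k with
  | zero => rfl
  | succ k ih => rw [powW_succ, updStar_append, h, ih]

def partW (ws : ℕ → List C) (k : ℕ) : List C := ((List.range k).map ws).flatten

lemma partW_zero (ws : ℕ → List C) : partW ws 0 = [] := rfl

lemma partW_succ (ws : ℕ → List C) (k : ℕ) : partW ws (k + 1) = partW ws k ++ ws k := by
  simp [partW, List.range_succ]

lemma partW_prefix (ws : ℕ → List C) {k l : ℕ} (h : k ≤ l) : partW ws k <+: partW ws l := by
  induction l with
  | zero => rw [Nat.le_zero.mp h]
  | succ l ih =>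
    rcases Nat.lt_or_ge k (l + 1) with h' | h'
    · exact (ih (by omega)).trans (by rw [partW_succ]; exact List.prefix_append _ _)
    · have : k = l + 1 := by omega
      subst this; exact List.prefix_refl _

lemma partW_len {ws : ℕ → List C} (hne : ∀ k, ws k ≠ []) (k : ℕ) :
    k ≤ (partW ws k).length := by
  induction k with
  | zero => simp
  | succ k ih =>
    rw [partW_succ, List.length_append]
    have : 1 ≤ (ws k).length := List.length_pos_iff.mpr (hne k)
    omega

lemma prefix_getD {l l' : List C} (h : l <+: l') {i : ℕ} (hi : i < l.length) (d : C) :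
    l.getD i d = l'.getD i d := by
  obtain ⟨t, rfl⟩ := h
  exact (List.getD_append _ _ _ _ hi).symm

lemma concatSeq_apply (ws : ℕ → List C) (i : ℕ) :
    concatSeq ws i = (partW ws (i + 1)).getD i default := rfl

lemma concatSeq_eq_getD {ws : ℕ → List C} (hne : ∀ k, ws k ≠ []) {i k : ℕ}
    (h : i < (partW ws k).length) : concatSeq ws i = (partW ws k).getD i default := by
  have hi : i < (partW ws (i + 1)).length := lt_of_lt_of_le (Nat.lt_succ_self i) (partW_len hne _)
  rcases Nat.le_total (i + 1) k with hk | hk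
  · exact prefix_getD (partW_prefix ws hk) hi _
  · exact (prefix_getD (partW_prefix ws hk) h _).symm

lemma concatSeq_congr {ws ws' : ℕ → List C} (hne : ∀ k, ws k ≠ []) (hne' : ∀ k, ws' k ≠ [])
    (h : ∀ k, ∃ k', partW ws k <+: partW ws' k') : concatSeq ws = concatSeq ws' := by
  funext i
  obtain ⟨k', hk'⟩ := h (i + 1)
  have hi : i < (partW ws (i + 1)).length := lt_of_lt_of_le (Nat.lt_succ_self i) (partW_len hne _)
  have hi' : i < (partW ws' k').length := lt_of_lt_of_le hi hk'.length_le
  rw [concatSeq_apply, prefix_getD hk' hi, ← concatSeq_eq_getD hne' hi']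



lemma getD_powW {u : List C} (hu : u ≠ []) {k i : ℕ} (h : i < (powW u k).length) :
    (powW u k).getD i default = u.getD (i % u.length) default := by
  induction k generalizing i with
  | zero => simp [powW] at h
  | succ k ih =>
    rw [powW_succ] at h ⊢
    rcases Nat.lt_or_ge i u.length with hi | hi
    · rw [List.getD_append _ _ _ _ hi, Nat.mod_eq_of_lt hi]
    · rw [List.getD_append_right _ _ _ _ hi]
      rw [List.length_append] at h
      have h' : i - u.length < (powW u k).length := by omega
      rw [ih h', Nat.mod_eq_sub_mod hi]

lemma partW_const (u : List C) (k : ℕ) : partW (fun _ => u) k = powW u k := by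
  induction k with
  | zero => rfl
  | succ k ih => rw [partW_succ, powW_succ', ih]

lemma periodic_eq_concatSeq_const {u : List C} (hu : u ≠ []) :
    periodic u = concatSeq (fun _ => u) := by
  funext i
  have hlen : 1 ≤ u.length := List.length_pos_iff.mpr hu
  have h : i < (powW u (i + 1)).length := by
    rw [length_powW]; nlinarith
  rw [concatSeq_apply, partW_const, getD_powW hu h]
  rfl

lemma rot_word (u v : List C) (hu : u ≠ []) :
    periodic (v ++ u) = app v (periodic (u ++ v)) := by
  funext i
  have hL : (v ++ u).length = u.length + v.length := by rw [List.length_append]; omega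
  have hL' : (u ++ v).length = u.length + v.length := by rw [List.length_append]
  set n := u.length with hn
  set p := v.length with hp
  have hnpos : 1 ≤ n := List.length_pos_iff.mpr hu
  rw [app_apply, periodic, periodic, hL, hL']
  rcases Nat.lt_or_ge i p with hi | hi
  · rw [if_pos (by omega : i < v.length), Nat.mod_eq_of_lt (by omega)]
    exact List.getD_append _ _ _ _ (by omega)
  · rw [if_neg (by omega : ¬ i < v.length)]
    set j := i - p with hj
    have hij : i = j + p := by omega
    set r := j % (n + p) with hr
    have hrlt : r < n + p := Nat.mod_lt _ (by omega)
    have h1 : i % (n + p) = (r + p) % (n + p) := by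
      rw [hij, Nat.add_mod, Nat.mod_eq_of_lt (show p < n + p by omega)]
    rw [h1]
    rcases Nat.lt_or_ge r n with hrn | hrn
    · rw [Nat.mod_eq_of_lt (show r + p < n + p by omega)]
      rw [List.getD_append_right _ _ _ _ (show v.length ≤ r + p by omega)]
      rw [List.getD_append _ _ _ _ (show r < u.length by omega)]
      congr 1
      omega
    · have h2 : (r + p) % (n + p) = r - n := by
        rw [Nat.mod_eq_sub_mod (show n + p ≤ r + p by omega),
          Nat.mod_eq_of_lt (show r + p - (n + p) < n + p by omega)]
        omega
      rw [h2]
      rw [List.getD_append _ _ _ _ (show r - n < v.length by omega)]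
      rw [List.getD_append_right _ _ _ _ (show u.length ≤ r by omega)]

lemma partW_alt (u v : List C) (j : ℕ) :
    partW (fun k => if k % 2 = 0 then u else v) (2 * j) = powW (u ++ v) j ∧
    partW (fun k => if k % 2 = 0 then u else v) (2 * j + 1) = powW (u ++ v) j ++ u := by
  induction j with
  | zero =>
    constructor
    · rfl
    · show partW _ 1 = _
      rw [show (1 : ℕ) = 0 + 1 from rfl, partW_succ, partW_zero, powW_zero]
      simp
  | succ j ih =>
    have e1 : 2 * (j + 1) = (2 * j + 1) + 1 := by ring
    constructor
    · rw [e1, partW_succ, ih.2]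
      rw [if_neg (show ¬ (2 * j + 1) % 2 = 0 by omega), powW_succ']
      simp [List.append_assoc]
    · rw [partW_succ, e1, partW_succ, ih.2]
      rw [if_neg (show ¬ (2 * j + 1) % 2 = 0 by omega),
        if_pos (show (2 * j + 1 + 1) % 2 = 0 by omega), powW_succ']
      simp [List.append_assoc]

lemma concatSeq_alt (u v : List C) (hu : u ≠ []) (hv : v ≠ []) :
    concatSeq (fun k => if k % 2 = 0 then u else v) = periodic (u ++ v) := by
  rw [periodic_eq_concatSeq_const (show u ++ v ≠ [] by simp [hu])]
  apply concatSeq_congr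
  · intro k
    rcases Nat.mod_two_eq_zero_or_one k with h | h <;> simp [h, hu, hv]
  · intro k; exact show u ++ v ≠ [] by simp [hu]
  · intro k
    rcases Nat.even_or_odd k with ⟨j, rfl⟩ | ⟨j, rfl⟩
    · refine ⟨j, ?_⟩
      rw [show j + j = 2 * j by ring, (partW_alt u v j).1, partW_const]
    · refine ⟨j + 1, ?_⟩
      rw [(partW_alt u v j).2, partW_const, powW_succ']
      exact ⟨v, by rw [List.append_assoc]⟩

section Main

variable {upd : M → C → M} {init : M} {W : Set (ℕ → C)} {m : M} {w : List C}

lemma win_concat (hcc : CycleConsistent upd init W) (hw : updStar upd init w = m)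
    (u v : List C) (hune : u ≠ []) (hvne : v ≠ [])
    (hu : updStar upd m u = m) (hv : updStar upd m v = m)
    (h1 : app w (periodic u) ∈ W) (h2 : app w (periodic v) ∈ W) :
    app w (periodic (u ++ v)) ∈ W := by
  have key := (hcc w (fun k => if k % 2 = 0 then u else v) ?_).1 ?_
  · rwa [concatSeq_alt u v hune hvne] at key
  · intro k
    rcases Nat.mod_two_eq_zero_or_one k with h | h <;> simp [h, hw, hune, hvne, hu, hv]
  · intro k
    rcases Nat.mod_two_eq_zero_or_one k with h | h <;> simp [h, h1, h2]

lemma lose_concat (hcc : CycleConsistent upd init W) (hw : updStar upd init w = m)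
    (u v : List C) (hune : u ≠ []) (hvne : v ≠ [])
    (hu : updStar upd m u = m) (hv : updStar upd m v = m)
    (h1 : app w (periodic u) ∉ W) (h2 : app w (periodic v) ∉ W) :
    app w (periodic (u ++ v)) ∉ W := by
  have key := (hcc w (fun k => if k % 2 = 0 then u else v) ?_).2 ?_
  · rwa [concatSeq_alt u v hune hvne] at key
  · intro k
    rcases Nat.mod_two_eq_zero_or_one k with h | h <;> simp [h, hw, hune, hvne, hu, hv]
  · intro k
    rcases Nat.mod_two_eq_zero_or_one k with h | h <;> simp [h, h1, h2]

lemma win_rot (hpi : PrefIndep upd init W) (hw : updStar upd init w = m)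
    (u v : List C) (hune : u ≠ []) (hv : updStar upd m v = m) :
    (app w (periodic (u ++ v)) ∈ W ↔ app w (periodic (v ++ u)) ∈ W) := by
  rw [rot_word u v hune, ← app_append]
  exact (hpi w (w ++ v) (by rw [updStar_append, hw, hv]) (periodic (u ++ v)))

end Main

end SAux

/-- repetition independence: if the combined cycle `γγ'` is winning on `m`,
then `γ(γ')^n` is winning on `m` for every `n ≥ 1`. -/
theorem stmt5 {C M : Type*} [Inhabited C] [Finite M]
    (upd : M → C → M) (init : M) (W : Set (ℕ → C))
    (hpi : PrefIndep upd init W) (hcc : CycleConsistent upd init W)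
    (m : M) (w : List C) (hw : updStar upd init w = m)
    (γ γ' : List C) (hγne : γ ≠ []) (hγ'ne : γ' ≠ [])
    (hγ : updStar upd m γ = m) (hγ' : updStar upd m γ' = m)
    (hwin : app w (periodic (γ ++ γ')) ∈ W) :
    ∀ n : ℕ, 1 ≤ n → app w (periodic (γ ++ (List.replicate n γ').flatten)) ∈ W := by
  intro n hn
  induction n with
  | zero => omega
  | succ n ih =>
    open SAux in
    have hA : ∀ k, updStar upd m (powW γ k) = m := updStar_powW hγ
    have hB : ∀ k, updStar upd m (powW γ' k) = m := updStar_powW hγ'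
    have hAne : ∀ k, 1 ≤ k → powW γ k ≠ [] := fun k hk => powW_ne_nil γ hγne hk
    have hBne : ∀ k, 1 ≤ k → powW γ' k ≠ [] := fun k hk => powW_ne_nil γ' hγ'ne hk
    rcases Nat.eq_zero_or_pos n with rfl | hn1
    · have e : (List.replicate 1 γ').flatten = γ' := by simp
      rw [e]; exact hwin
    · have IH : app w (periodic (γ ++ powW γ' n)) ∈ W := ih hn1
      show app w (periodic (γ ++ powW γ' (n+1))) ∈ W
      by_contra hL
      -- γ' is a losing cycle
      have hblose : app w (periodic γ') ∉ W := by
        intro h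
        have h2 := win_concat hcc hw (γ ++ powW γ' n) γ' (by simp [hγne]) hγ'ne
          (by rw [updStar_append, hγ]; exact hB n) hγ' IH h
        rw [List.append_assoc, ← powW_succ'] at h2
        exact hL h2
      -- γ is a winning cycle
      have hawin : app w (periodic γ) ∈ W := by
        by_contra h
        have e1 : (List.replicate 1 γ').flatten = γ' := by simp
        exact lose_concat hcc hw γ γ' hγne hγ'ne hγ hγ' h hblose hwin
      -- powers of γ are winning
      have Wa : ∀ k, 1 ≤ k → app w (periodic (powW γ k)) ∈ W := by
        intro k hk
        induction k with
        | zero => omega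
        | succ k ihk =>
          rcases Nat.eq_zero_or_pos k with rfl | hpos
          · rw [powW_one]; exact hawin
          · have h2 := win_concat hcc hw γ (powW γ k) hγne (hAne k hpos) hγ (hA k)
              hawin (ihk hpos)
            rwa [← powW_succ] at h2
      -- balanced blocks γ^k γ'^k are winning
      have Wbb : ∀ k, 1 ≤ k → app w (periodic (powW γ k ++ powW γ' k)) ∈ W := by
        intro k hk
        induction k with
        | zero => omega
        | succ k ihk =>
          rcases Nat.eq_zero_or_pos k with rfl | hpos
          · rw [powW_one, powW_one]; exact hwin
          · have hk' := ihk hpos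
            have hrot : app w (periodic (γ' ++ γ)) ∈ W :=
              (win_rot hpi hw γ γ' hγne hγ').mp hwin
            have h2 := win_concat hcc hw (γ' ++ γ) (powW γ k ++ powW γ' k)
              (by simp [hγ'ne]) (by simp [hAne k hpos])
              (by rw [updStar_append, hγ', hγ]) (by rw [updStar_append, hA, hB]) hrot hk'
            have e : (γ' ++ γ) ++ (powW γ k ++ powW γ' k)
                = γ' ++ (powW γ (k+1) ++ powW γ' k) := by
              rw [powW_succ γ k]; simp [List.append_assoc]
            rw [e] at h2
            have h3 := (win_rot hpi hw (powW γ (k+1) ++ powW γ' k) γ'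
              (by simp [hAne (k+1) (by omega)]) hγ').mpr h2
            rwa [List.append_assoc, ← powW_succ'] at h3
      -- blocks γ'^B γ^A with B ≤ A are winning
      have Wblock : ∀ Bk Ak, 1 ≤ Bk → Bk ≤ Ak →
          app w (periodic (powW γ' Bk ++ powW γ Ak)) ∈ W := by
        intro Bk Ak hB1 hBA
        have hstep : app w (periodic (powW γ Ak ++ powW γ' Bk)) ∈ W := by
          rcases Nat.eq_or_lt_of_le hBA with rfl | hlt
          · exact Wbb Bk hB1
          · have hd : 1 ≤ Ak - Bk := by omega
            have h3 := win_concat hcc hw (powW γ (Ak - Bk)) (powW γ Bk ++ powW γ' Bk)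
              (hAne _ hd) (by simp [hAne Bk hB1]) (hA _)
              (by rw [updStar_append, hA, hB]) (Wa _ hd) (Wbb Bk hB1)
            have e : powW γ (Ak - Bk) ++ (powW γ Bk ++ powW γ' Bk)
                = powW γ Ak ++ powW γ' Bk := by
              rw [← List.append_assoc, ← powW_add,
                show Ak - Bk + Bk = Ak from by omega]
            rwa [e] at h3
        exact (win_rot hpi hw (powW γ Ak) (powW γ' Bk) (hAne Ak (by omega)) (hB Bk)).mp hstep
      -- blocks γ^k γ'^((n+1)k) are losing
      have Lpow : ∀ k, 1 ≤ k → app w (periodic (powW γ k ++ powW γ' ((n+1) * k))) ∉ W := by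
        intro k hk
        induction k with
        | zero => omega
        | succ k ihk =>
          rcases Nat.eq_zero_or_pos k with rfl | hpos
          · rw [powW_one, Nat.mul_one]; exact hL
          · have ihk' := ihk hpos
            have hrotL : app w (periodic (powW γ' (n+1) ++ γ)) ∉ W := by
              intro h
              exact hL ((win_rot hpi hw γ (powW γ' (n+1)) hγne (hB (n+1))).mpr h)
            have h2 := lose_concat hcc hw (powW γ' (n+1) ++ γ)
              (powW γ k ++ powW γ' ((n+1) * k))
              (by simp [hγne]) (by simp [hAne k hpos])
              (by rw [updStar_append, hB, hγ]) (by rw [updStar_append, hA, hB]) hrotL ihk'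
            have e : (powW γ' (n+1) ++ γ) ++ (powW γ k ++ powW γ' ((n+1) * k))
                = powW γ' (n+1) ++ (powW γ (k+1) ++ powW γ' ((n+1) * k)) := by
              rw [powW_succ γ k]; simp [List.append_assoc]
            rw [e] at h2
            have h3 : app w (periodic ((powW γ (k+1) ++ powW γ' ((n+1) * k))
                ++ powW γ' (n+1))) ∉ W := by
              intro h
              exact h2 ((win_rot hpi hw (powW γ (k+1) ++ powW γ' ((n+1) * k)) (powW γ' (n+1))
                (by simp [hAne (k+1) (by omega)]) (hB (n+1))).mp h)
            have e2 : (powW γ (k+1) ++ powW γ' ((n+1) * k)) ++ powW γ' (n+1)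
                = powW γ (k+1) ++ powW γ' ((n+1) * (k+1)) := by
              rw [List.append_assoc, ← powW_add,
                show (n+1) * k + (n+1) = (n+1) * (k+1) from by ring]
            rwa [e2] at h3
      -- the two decompositions of the contradiction word
      have hm1 : ∀ k : ℕ, 1 ≤ (n+2)^k := fun k => Nat.one_le_pow _ _ (by omega)
      have hmrec : ∀ k : ℕ, (n+2)^(k+1) = (n+1) * (n+2)^k + (n+2)^k := by
        intro k; rw [pow_succ]; ring
      have hB1 : ∀ k : ℕ, 1 ≤ (n+1) * (n+2)^k := fun k =>
        Nat.one_le_iff_ne_zero.mpr (by positivity)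
      have hX1 := (hcc w (fun k => powW γ ((n+2)^k) ++ powW γ' ((n+1) * (n+2)^k)) ?_).2 ?_
      rotate_left
      · intro k
        rw [hw]
        exact ⟨by simp [hAne _ (hm1 k)], by rw [updStar_append, hA, hB]⟩
      · intro k
        exact Lpow _ (hm1 k)
      have hX2 := (hcc w (fun k => if k = 0 then powW γ 1
          else powW γ' ((n+1) * (n+2)^(k-1)) ++ powW γ ((n+2)^k)) ?_).1 ?_
      rotate_left
      · intro k
        rw [hw]
        rcases Nat.eq_zero_or_pos k with rfl | hk
        · simp only [if_pos rfl]
          exact ⟨hAne _ le_rfl, hA _⟩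
        · simp only [if_neg (show ¬ k = 0 by omega)]
          exact ⟨by simp [hBne _ (hB1 (k-1))], by rw [updStar_append, hB, hA]⟩
      · intro k
        rcases Nat.eq_zero_or_pos k with rfl | hk
        · simp only [if_pos rfl]
          rw [powW_one]
          exact hawin
        · simp only [if_neg (show ¬ k = 0 by omega)]
          refine Wblock _ _ (hB1 (k-1)) ?_
          obtain ⟨j, rfl⟩ : ∃ j, k = j + 1 := ⟨k - 1, by omega⟩
          simp only [Nat.add_sub_cancel]
          rw [hmrec j]
          omega
      -- the two concatenations are the same word
      have hpart : ∀ k, partW (fun k => if k = 0 then powW γ 1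
          else powW γ' ((n+1) * (n+2)^(k-1)) ++ powW γ ((n+2)^k)) (k+1)
          = partW (fun k => powW γ ((n+2)^k) ++ powW γ' ((n+1) * (n+2)^k)) k
            ++ powW γ ((n+2)^k) := by
        intro k
        induction k with
        | zero =>
          rw [partW_succ, partW_zero, partW_zero]
          simp [pow_zero]
        | succ k ihk =>
          rw [partW_succ, ihk]
          simp only [if_neg (show ¬ k + 1 = 0 by omega)]
          rw [partW_succ]
          simp only [Nat.add_sub_cancel]
          simp [List.append_assoc]
      have key : concatSeq (fun k => powW γ ((n+2)^k) ++ powW γ' ((n+1) * (n+2)^k))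
          = concatSeq (fun k => if k = 0 then powW γ 1
            else powW γ' ((n+1) * (n+2)^(k-1)) ++ powW γ ((n+2)^k)) := by
        apply concatSeq_congr
        · intro k
          simp [hAne _ (hm1 k)]
        · intro k
          rcases Nat.eq_zero_or_pos k with rfl | hk
          · simp only [if_pos rfl]
            exact hAne _ le_rfl
          · simp only [if_neg (show ¬ k = 0 by omega)]
            simp [hBne _ (hB1 (k-1))]
        · intro k
          exact ⟨k + 1, ⟨powW γ ((n+2)^k), (hpart k).symm⟩⟩
      rw [key] at hX1
      exact hX1 hX2
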